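/- Suppose Y: Ω → H satisfies the integral identity Y(ω) = ∫_{−∞}^0 T_{−s} p⁺ F(Y(θ(s,ω))) ds − ∫_0^∞ T_{−s} p⁻ F(Y(θ(s,ω))) ds + Y₁(ω), where Y₁(θ(t,ω)) = T_t Y₁(ω) + ∫_0^t T_{t−s} B₀ dW(s)(ω) is the stationary Ornstein–Uhlenbeck-type term. Then for every t ≥ 0 and ω ∈ Ω, Y(θ(t,ω)) = T_t Y(ω) + ∫_0^t T_{t−s} F(Y(θ(s,ω))) ds + ∫_0^t T_{t−s} B₀ dW(s)(ω); that is, Y(θ(t,·)) solves the mild-solution variation-of-constants identity along the shift flow. -/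

import Mathlib

open MeasureTheory

/-- Translation of a set integral over ℝ. -/
lemma shift_setIntegral {H : Type*} [NormedAddCommGroup H] [NormedSpace ℝ H]
    (f : ℝ → H) (t : ℝ) (s : Set ℝ) :
    ∫ x in (· + t) ⁻¹' s, f (x + t) = ∫ x in s, f x :=
  (measurePreserving_add_right volume t).setIntegral_preimage_emb
    (MeasurableEquiv.addRight t).measurableEmbedding f s

lemma shift_integrableOn {H : Type*} [NormedAddCommGroup H]
    {f : ℝ → H} {t : ℝ} {s : Set ℝ} :
    IntegrableOn (fun x => f (x + t)) ((· + t) ⁻¹' s) ↔ IntegrableOn f s :=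
  (measurePreserving_add_right volume t).integrableOn_comp_preimage
    (MeasurableEquiv.addRight t).measurableEmbedding

/-- A solution `Y` of the integral identity
`Y(ω) = ∫_{-∞}^0 T_{-s}p⁺F(Y(θ(s,ω)))ds − ∫_0^∞ T_{-s}p⁻F(Y(θ(s,ω)))ds + Y₁(ω)`
satisfies the variation-of-constants (mild solution) identity along the flow.
Here `A s` stands for `T_{-s}p⁺`, `B s` for `T_{-s}p⁻`, and `I t ω` for the
stochastic convolution `∫_0^t T_{t-s}B₀ dW(s)(ω)`. -/
theorem stationary_point_solves_mild_equation
    {Ω : Type*} {H : Type*} [NormedAddCommGroup H] [NormedSpace ℝ H]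
    [CompleteSpace H]
    (θ : ℝ → Ω → Ω) (T A B : ℝ → H →L[ℝ] H) (F : H → H) (Y Y₁ : Ω → H)
    (I : ℝ → Ω → H)
    (hθgroup : ∀ t₁ t₂ : ℝ, ∀ ω, θ (t₁ + t₂) ω = θ t₂ (θ t₁ ω))
    (hθzero : ∀ ω, θ 0 ω = ω)
    (hT0 : T 0 = ContinuousLinearMap.id ℝ H)
    (hTsemi : ∀ s t : ℝ, 0 ≤ s → 0 ≤ t → T (s + t) = (T s).comp (T t))
    (hA : ∀ t : ℝ, 0 ≤ t → ∀ s : ℝ, A (s - t) = (T t).comp (A s))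
    (hB : ∀ t : ℝ, 0 ≤ t → ∀ s : ℝ, B (s - t) = (T t).comp (B s))
    (hsum : ∀ u : ℝ, 0 ≤ u → T u = A (-u) + B (-u))
    (hint1 : ∀ ω, IntegrableOn (fun s => A s (F (Y (θ s ω)))) (Set.Iic (0:ℝ)))
    (hint2 : ∀ ω, IntegrableOn (fun s => B s (F (Y (θ s ω)))) (Set.Ici (0:ℝ)))
    (hY : ∀ ω, Y ω =
      (∫ s in Set.Iic (0:ℝ), A s (F (Y (θ s ω))))
        - (∫ s in Set.Ici (0:ℝ), B s (F (Y (θ s ω)))) + Y₁ ω)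
    (hY₁ : ∀ t : ℝ, 0 ≤ t → ∀ ω, Y₁ (θ t ω) = T t (Y₁ ω) + I t ω) :
    ∀ t : ℝ, 0 ≤ t → ∀ ω,
      Y (θ t ω) = T t (Y ω)
        + (∫ s in Set.Icc (0:ℝ) t, (T (t - s)) (F (Y (θ s ω)))) + I t ω := by
  intro t ht ω
  set g : ℝ → H := fun s => F (Y (θ s ω)) with hg
  have hshift : ∀ s : ℝ, F (Y (θ s (θ t ω))) = g (s + t) := by
    intro s
    rw [hg]
    simp only
    rw [← hθgroup, add_comm]
  -- the shifted integrands
  have hAeq : ∀ u : ℝ, A (u - t) (g u) = T t (A u (g u)) := fun u => by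
    rw [hA t ht u]; rfl
  have hBeq : ∀ u : ℝ, B (u - t) (g u) = T t (B u (g u)) := fun u => by
    rw [hB t ht u]; rfl
  -- preimages
  have hpreA : (· + t) ⁻¹' Set.Iic t = Set.Iic (0:ℝ) := by
    ext x; simp
  have hpreB : (· + t) ⁻¹' Set.Ici t = Set.Ici (0:ℝ) := by
    ext x; simp
  -- translation identities for the integrals
  have eA : ∫ u in Set.Iic t, A (u - t) (g u) = ∫ s in Set.Iic (0:ℝ), A s (g (s + t)) := by
    have := shift_setIntegral (fun u => A (u - t) (g u)) t (Set.Iic t)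
    rw [hpreA] at this
    rw [← this]
    congr 1 with s
    simp
  have eB : ∫ u in Set.Ici t, B (u - t) (g u) = ∫ s in Set.Ici (0:ℝ), B s (g (s + t)) := by
    have := shift_setIntegral (fun u => B (u - t) (g u)) t (Set.Ici t)
    rw [hpreB] at this
    rw [← this]
    congr 1 with s
    simp
  -- integrability of shifted integrands
  have hint1' : IntegrableOn (fun s => A s (g (s + t))) (Set.Iic (0:ℝ)) := by
    have := hint1 (θ t ω)
    simpa [hshift] using this
  have hint2' : IntegrableOn (fun s => B s (g (s + t))) (Set.Ici (0:ℝ)) := by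
    have := hint2 (θ t ω)
    simpa [hshift] using this
  have iA : IntegrableOn (fun u => A (u - t) (g u)) (Set.Iic t) := by
    rw [← hpreA] at hint1'
    have := (shift_integrableOn (f := fun u => A (u - t) (g u)) (t := t)
      (s := Set.Iic t)).mp ?_
    · exact this
    · simpa using hint1'
  have iB0 : IntegrableOn (fun u => B (u - t) (g u)) (Set.Ici (0:ℝ)) := by
    have : IntegrableOn (fun u => T t (B u (g u))) (Set.Ici (0:ℝ)) :=
      (T t).integrable_comp (hint2 ω)
    simpa [hBeq] using this
  -- split the A-integral at 0
  have splitA : ∫ u in Set.Iic t, A (u - t) (g u)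
      = (∫ u in Set.Iic (0:ℝ), A (u - t) (g u)) + ∫ u in Set.Ioc (0:ℝ) t, A (u - t) (g u) := by
    rw [← setIntegral_union (Set.Iic_disjoint_Ioc le_rfl) measurableSet_Ioc
      (iA.mono_set (Set.Iic_subset_Iic.mpr ht)) (iA.mono_set Set.Ioc_subset_Iic_self)]
    rw [Set.Iic_union_Ioc_eq_Iic ht]
  -- split the B-integral at t
  have splitB : ∫ u in Set.Ici (0:ℝ), B (u - t) (g u)
      = (∫ u in Set.Ico (0:ℝ) t, B (u - t) (g u)) + ∫ u in Set.Ici t, B (u - t) (g u) := by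
    rw [← setIntegral_union (Set.disjoint_left.mpr fun x hx hx' => hx.2.not_ge hx') measurableSet_Ici
      (iB0.mono_set Set.Ico_subset_Ici_self) (iB0.mono_set (Set.Ici_subset_Ici.mpr ht))]
    rw [Set.Ico_union_Ici_eq_Ici ht]
  -- pull T t out of the integrals over Iic 0 and Ici 0
  have pullA : ∫ u in Set.Iic (0:ℝ), A (u - t) (g u)
      = T t (∫ u in Set.Iic (0:ℝ), A u (g u)) := by
    rw [← ContinuousLinearMap.integral_comp_comm (T t) (hint1 ω)]
    simp only [hAeq]
    rfl
  have pullB : ∫ u in Set.Ici t, B (u - t) (g u)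
      = T t (∫ u in Set.Ici (0:ℝ), B u (g u))
        - ∫ u in Set.Ico (0:ℝ) t, B (u - t) (g u) := by
    have : ∫ u in Set.Ici (0:ℝ), B (u - t) (g u)
        = T t (∫ u in Set.Ici (0:ℝ), B u (g u)) := by
      rw [← ContinuousLinearMap.integral_comp_comm (T t) (hint2 ω)]
      simp only [hBeq]
      rfl
    rw [this] at splitB
    rw [eq_sub_iff_add_eq, add_comm, ← splitB]
  -- the middle integrals combine into the variation-of-constants term
  have mid : (∫ u in Set.Ioc (0:ℝ) t, A (u - t) (g u))
      + (∫ u in Set.Ico (0:ℝ) t, B (u - t) (g u))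
      = ∫ u in Set.Icc (0:ℝ) t, T (t - u) (g u) := by
    rw [← integral_Icc_eq_integral_Ioc, ← integral_Icc_eq_integral_Ico]
    rw [← integral_add (iA.mono_set Set.Icc_subset_Iic_self)
      (iB0.mono_set Set.Icc_subset_Ici_self)]
    refine setIntegral_congr_fun measurableSet_Icc (fun u hu => ?_)
    have h1 : (0:ℝ) ≤ t - u := by linarith [hu.2]
    have := hsum (t - u) h1
    have h2 : -(t - u) = u - t := by ring
    rw [h2] at this
    rw [this]
    rfl
  -- put everything together
  have hYθ : Y (θ t ω)
      = (∫ s in Set.Iic (0:ℝ), A s (g (s + t)))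
        - (∫ s in Set.Ici (0:ℝ), B s (g (s + t))) + Y₁ (θ t ω) := by
    have := hY (θ t ω)
    simpa [hshift] using this
  rw [hYθ, ← eA, ← eB, splitA, pullA, pullB, hY₁ t ht ω, hY ω]
  rw [← mid]
  simp only [map_sub, map_add]
  abel
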